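/- Reflection involution property: let U = 2(vv*/v*v) − I be a unitary reflection with all first-column entries nonzero, δ the diagonal matrix of the first column of U, D a positive diagonal matrix, A = δ^{-1} U √D, and Φ = (Ā)* the degree-N Krawtchouk matrix. Then ((δ* D^{-1/2})̄ · Φ)² = I, where (δ* D^{-1/2})̄ denotes the N-th symmetric power of the diagonal matrix δ* D^{-1/2}. -/

import Mathlib

open MvPolynomial Matrix BigOperators

/-- Multi-indices of `d+1` entries with total degree `N`. -/
abbrev MIdx (d N : ℕ) := {m : Fin (d+1) → ℕ // ∑ i, m i = N}

instance (d N : ℕ) : Fintype (MIdx d N) :=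
  Fintype.subtype (Finset.Nat.antidiagonalTuple (d+1) N)
    (fun _ => Finset.Nat.mem_antidiagonalTuple)

/-- The `(m,n)` matrix element of the symmetric power of `A`:
the coefficient of `x^n` in `(Ax)^m`. -/
noncomputable def symPowEntry {R : Type} [CommSemiring R] {d : ℕ}
    (A : Matrix (Fin (d+1)) (Fin (d+1)) R) (m n : Fin (d+1) → ℕ) : R :=
  MvPolynomial.coeff (Finsupp.equivFunOnFinite.symm n)
    (∏ i, (∑ j, MvPolynomial.C (A i j) * MvPolynomial.X j) ^ m i)

/-- The `N`-th symmetric power of `A`, as a matrix indexed by multi-indices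
of total degree `N`. -/
noncomputable def symPow {R : Type} [CommSemiring R] (d N : ℕ)
    (A : Matrix (Fin (d+1)) (Fin (d+1)) R) : Matrix (MIdx d N) (MIdx d N) R :=
  fun m n => symPowEntry A m.1 n.1

/-- `Γ(g)_{mn}`: the coefficient of `x^n` in `(Σ_{μ,λ} g_{μλ} x_λ ∂_μ) x^m`. -/
noncomputable def gammaEntry {d : ℕ} (g : Matrix (Fin (d+1)) (Fin (d+1)) ℂ)
    (m n : Fin (d+1) → ℕ) : ℂ :=
  MvPolynomial.coeff (Finsupp.equivFunOnFinite.symm n)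
    (∑ μ, ∑ lam, MvPolynomial.C (g μ lam) *
      (MvPolynomial.X lam * MvPolynomial.pderiv μ
        (MvPolynomial.monomial (Finsupp.equivFunOnFinite.symm m) 1)))

/-- The degree-`N` generator `Γ(g)` of the symmetric representation. -/
noncomputable def gammaMat (d N : ℕ) (g : Matrix (Fin (d+1)) (Fin (d+1)) ℂ) :
    Matrix (MIdx d N) (MIdx d N) ℂ :=
  fun m n => gammaEntry g m.1 n.1

/-- The diagonal matrix `B` of multinomial coefficients of degree `N`. -/
noncomputable def multinomMat (d N : ℕ) : Matrix (MIdx d N) (MIdx d N) ℂ :=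
  Matrix.diagonal fun m => (Nat.multinomial Finset.univ m.1 : ℂ)

namespace SymPowAux

variable {R : Type} [CommSemiring R] {d : ℕ}

/-- The linear form `Σ_j A_{ij} x_j`. -/
noncomputable def lin (A : Matrix (Fin (d+1)) (Fin (d+1)) R) (i : Fin (d+1)) :
    MvPolynomial (Fin (d+1)) R :=
  ∑ j, MvPolynomial.C (A i j) * MvPolynomial.X j

lemma lin_isHomogeneous (A : Matrix (Fin (d+1)) (Fin (d+1)) R) (i : Fin (d+1)) :
    (lin A i).IsHomogeneous 1 := by
  apply MvPolynomial.IsHomogeneous.sum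
  intro j _
  exact MvPolynomial.isHomogeneous_C_mul_X _ _

lemma bind₁_lin_monomial (A : Matrix (Fin (d+1)) (Fin (d+1)) R) (m : Fin (d+1) → ℕ) :
    MvPolynomial.bind₁ (lin A)
      (MvPolynomial.monomial (Finsupp.equivFunOnFinite.symm m) 1)
      = ∏ i, lin A i ^ m i := by
  rw [MvPolynomial.bind₁_monomial, _root_.map_one, one_mul]
  rw [Finset.prod_subset (Finset.subset_univ _) (fun i _ hi => by
    simp only [Finsupp.mem_support_iff, not_not] at hi
    rw [hi, pow_zero])]
  simp [Finsupp.coe_equivFunOnFinite_symm]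

lemma symPowEntry_eq (A : Matrix (Fin (d+1)) (Fin (d+1)) R) (m n : Fin (d+1) → ℕ) :
    symPowEntry A m n = MvPolynomial.coeff (Finsupp.equivFunOnFinite.symm n)
      (MvPolynomial.bind₁ (lin A)
        (MvPolynomial.monomial (Finsupp.equivFunOnFinite.symm m) 1)) := by
  rw [bind₁_lin_monomial]; rfl

lemma bind₁_lin_lin (A B : Matrix (Fin (d+1)) (Fin (d+1)) R) (i : Fin (d+1)) :
    MvPolynomial.bind₁ (lin A) (lin B i) = lin (B * A) i := by
  simp only [lin, _root_.map_sum, _root_.map_mul, MvPolynomial.bind₁_C_right,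
    MvPolynomial.bind₁_X_right, Matrix.mul_apply]
  simp_rw [Finset.mul_sum, ← mul_assoc, ← MvPolynomial.C_mul]
  rw [Finset.sum_comm]
  exact Finset.sum_congr rfl fun k _ => (Finset.sum_mul _ _ _).symm

lemma symPow_mul (d N : ℕ) (P Q : Matrix (Fin (d+1)) (Fin (d+1)) R) :
    symPow d N (P * Q) = symPow d N P * symPow d N Q := by
  classical
  ext m n
  set e := (Finsupp.equivFunOnFinite (α := Fin (d+1)) (M := ℕ)).symm with he
  set q := MvPolynomial.bind₁ (lin P) (MvPolynomial.monomial (e m.1) 1) with hqdef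
  have key : MvPolynomial.bind₁ (lin (P * Q)) (MvPolynomial.monomial (e m.1) 1)
      = MvPolynomial.bind₁ (lin Q) q := by
    rw [hqdef, MvPolynomial.bind₁_bind₁]
    exact congrArg (fun f => MvPolynomial.bind₁ f ((MvPolynomial.monomial (e m.1)) 1))
      (funext fun i => (bind₁_lin_lin Q P i).symm)
  have hq : q.IsHomogeneous N := by
    rw [hqdef, bind₁_lin_monomial]
    have := MvPolynomial.IsHomogeneous.prod (Finset.univ)
      (fun i => lin P i ^ m.1 i) (fun i => m.1 i)
      (fun i _ => by simpa using (lin_isHomogeneous P i).pow (m.1 i))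
    rwa [m.2] at this
  -- support of q is contained in degree-N multiindices
  have hsupp : q.support ⊆ Finset.univ.image (fun p : MIdx d N => e p.1) := by
    intro w hw
    have hdeg : (Finsupp.weight 1) w = N := hq (MvPolynomial.mem_support_iff.mp hw)
    have hsum : ∑ i, w i = N := by
      rw [← hdeg]
      simp only [Finsupp.weight_apply, Finsupp.sum, smul_eq_mul, Pi.one_apply, mul_one]
      exact (Finset.sum_subset (Finset.subset_univ _)
        (fun i _ hi => by simpa [Finsupp.mem_support_iff, not_not] using hi)).symm
    refine Finset.mem_image.mpr ⟨⟨Finsupp.equivFunOnFinite w, by simpa using hsum⟩,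
      Finset.mem_univ _, ?_⟩
    simp [he]
  -- expand q as a sum of monomials
  have hrep : q = ∑ w ∈ Finset.univ.image (fun p : MIdx d N => e p.1),
      MvPolynomial.monomial w (MvPolynomial.coeff w q) :=
    (MvPolynomial.support_sum_monomial_coeff q).symm.trans
      (Finset.sum_subset hsupp (fun w _ hw => by
        rw [MvPolynomial.notMem_support_iff.mp hw, _root_.map_zero]))
  have hinj : Function.Injective (fun p : MIdx d N => e p.1) := by
    intro a b hab
    exact Subtype.ext (Finsupp.equivFunOnFinite.symm.injective hab)
  show symPowEntry (P * Q) m.1 n.1 = ∑ p : MIdx d N, symPowEntry P m.1 p.1 * symPowEntry Q p.1 n.1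
  rw [symPowEntry_eq, key, hrep, _root_.map_sum,
    Finset.sum_image (fun a _ b _ h => hinj h)]
  rw [MvPolynomial.coeff_sum]
  apply Finset.sum_congr rfl
  intro p _
  have : (MvPolynomial.monomial (e p.1)) (MvPolynomial.coeff (e p.1) q)
      = MvPolynomial.C (MvPolynomial.coeff (e p.1) q) * MvPolynomial.monomial (e p.1) 1 := by
    rw [MvPolynomial.C_mul_monomial, mul_one]
  rw [this, _root_.map_mul, MvPolynomial.bind₁_C_right, MvPolynomial.coeff_C_mul,
    symPowEntry_eq P, symPowEntry_eq Q, hqdef]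

lemma symPow_diagonal (d N : ℕ) (c : Fin (d+1) → R) :
    symPow d N (Matrix.diagonal c)
      = Matrix.diagonal (fun m : MIdx d N => ∏ i, c i ^ m.1 i) := by
  classical
  ext m n
  show symPowEntry (Matrix.diagonal c) m.1 n.1 = _
  unfold symPowEntry
  have hlin : ∀ i, (∑ j, MvPolynomial.C (Matrix.diagonal c i j) * MvPolynomial.X j
      : MvPolynomial (Fin (d+1)) R) = MvPolynomial.C (c i) * MvPolynomial.X i := by
    intro i
    rw [Finset.sum_eq_single i (fun b _ hb => by
      rw [Matrix.diagonal_apply_ne' c hb, _root_.map_zero, zero_mul]) (by simp)]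
    rw [Matrix.diagonal_apply_eq]
  simp_rw [hlin, mul_pow, ← _root_.map_pow]
  rw [Finset.prod_mul_distrib, ← _root_.map_prod]
  have hmon : (∏ i, (MvPolynomial.X i : MvPolynomial (Fin (d+1)) R) ^ m.1 i)
      = MvPolynomial.monomial (Finsupp.equivFunOnFinite.symm m.1) 1 := by
    rw [MvPolynomial.monomial_eq, _root_.map_one, one_mul, Finsupp.prod_pow]
    simp [Finsupp.coe_equivFunOnFinite_symm]
  rw [hmon, MvPolynomial.coeff_C_mul, MvPolynomial.coeff_monomial, Matrix.diagonal_apply]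
  by_cases h : m = n
  · subst h; simp
  · rw [if_neg (fun hh => h (Subtype.ext (Finsupp.equivFunOnFinite.symm.injective hh))),
      if_neg h, mul_zero]

end SymPowAux

/-- Reflection involution property: for a unitary reflection
`U = 2vv*/(v*v) − I` with nonzero first-column entries, `A = δ⁻¹ U √D` and
`Φ = (Ā)*`, one has `((δ* D^{-1/2})̄ · Φ)² = I`. -/
theorem reflection_involution (d N : ℕ) (v : Fin (d+1) → ℂ) (hv : v ≠ 0)
    (Dv : Fin (d+1) → ℝ) (hD : ∀ i, 0 < Dv i) :
    ∀ U : Matrix (Fin (d+1)) (Fin (d+1)) ℂ,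
      U = (2 / ∑ i, (starRingEnd ℂ) (v i) * v i) •
            Matrix.vecMulVec v (fun j => (starRingEnd ℂ) (v j)) - 1 →
      (∀ i, U i 0 ≠ 0) →
      ∀ A : Matrix (Fin (d+1)) (Fin (d+1)) ℂ,
        A = (Matrix.diagonal fun i => U i 0)⁻¹ * U *
            Matrix.diagonal (fun i => (Real.sqrt (Dv i) : ℂ)) →
        ∀ Φ : Matrix (MIdx d N) (MIdx d N) ℂ,
          Φ = (symPow d N A)ᴴ →
          (symPow d N ((Matrix.diagonal fun i => U i 0)ᴴ *
              Matrix.diagonal (fun i => ((Real.sqrt (Dv i))⁻¹ : ℂ))) * Φ) ^ 2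
            = 1 := by
  classical
  intro U hU hU0 A hA Φ hΦ
  open SymPowAux in
  -- the scalar t = v* v is nonzero
  have ht : (∑ i, (starRingEnd ℂ) (v i) * v i) ≠ 0 := by
    have hre : ∀ i ∈ (Finset.univ : Finset (Fin (d+1))),
        (starRingEnd ℂ) (v i) * v i = ((Complex.normSq (v i) : ℝ) : ℂ) := fun i _ => by
      rw [mul_comm, Complex.mul_conj]
    rw [Finset.sum_congr rfl hre, ← Complex.ofReal_sum, Ne, Complex.ofReal_eq_zero]
    intro h0
    apply hv
    funext i
    have hle : ∀ i ∈ (Finset.univ : Finset (Fin (d+1))), (0:ℝ) ≤ Complex.normSq (v i) :=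
      fun i _ => Complex.normSq_nonneg _
    exact Complex.normSq_eq_zero.mp
      ((Finset.sum_eq_zero_iff_of_nonneg hle).mp h0 i (Finset.mem_univ i))
  set t : ℂ := ∑ i, (starRingEnd ℂ) (v i) * v i with htdef
  set W : Matrix (Fin (d+1)) (Fin (d+1)) ℂ :=
    Matrix.vecMulVec v (fun j => (starRingEnd ℂ) (v j)) with hWdef
  have hWW : W * W = t • W := by
    ext i k
    simp only [Matrix.mul_apply, Matrix.vecMulVec_apply, Matrix.smul_apply, smul_eq_mul,
      hWdef, htdef, Finset.sum_mul]
    exact Finset.sum_congr rfl fun j _ => by ring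
  have hU2 : U * U = 1 := by
    have hexp : U * U = ((2/t) * (2/t)) • (W * W) - (2/t) • W - (2/t) • W + 1 := by
      rw [hU, sub_mul, mul_sub, one_mul, mul_one, smul_mul_assoc, mul_smul_comm, smul_smul]
      abel
    rw [hexp, hWW, smul_smul]
    have hsc : (2/t) * (2/t) * t = (2/t) + (2/t) := by field_simp; ring
    rw [hsc, add_smul]
    abel
  -- notation
  set c : Fin (d+1) → ℂ := fun i => (starRingEnd ℂ) (U i 0) * ((Real.sqrt (Dv i))⁻¹ : ℂ)
    with hcdef
  set cbar : Fin (d+1) → ℂ := fun i => U i 0 * ((Real.sqrt (Dv i))⁻¹ : ℂ) with hcbardef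
  have hsq0 : ∀ i, ((Real.sqrt (Dv i) : ℝ) : ℂ) ≠ 0 := fun i => by
    simp only [Ne, Complex.ofReal_eq_zero]
    exact ne_of_gt (Real.sqrt_pos.mpr (hD i))
  have hc0 : ∀ i, c i ≠ 0 := fun i =>
    mul_ne_zero (by simpa using hU0 i) (inv_ne_zero (hsq0 i))
  have hstarc : ∀ i, star (c i) = cbar i := fun i => by
    simp [hcdef, hcbardef, Complex.conj_ofReal, mul_comm]
  have hstarcbar : ∀ i, star (cbar i) = c i := fun i => by
    simp [hcdef, hcbardef, Complex.conj_ofReal, mul_comm]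
  -- the diagonal matrix in the statement is `diagonal c`
  have hCd : (Matrix.diagonal fun i => U i 0)ᴴ *
      Matrix.diagonal (fun i => ((Real.sqrt (Dv i))⁻¹ : ℂ)) = Matrix.diagonal c := by
    rw [Matrix.diagonal_conjTranspose, Matrix.diagonal_mul_diagonal]
    exact congrArg Matrix.diagonal (_root_.funext fun i => rfl)
  -- the matrix identity A * diag cbar * A = diag (cbar⁻¹)
  have hdinv : (Matrix.diagonal fun i => U i 0)⁻¹
      = Matrix.diagonal (fun i => (U i 0)⁻¹) := by
    refine Matrix.inv_eq_right_inv ?_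
    rw [Matrix.diagonal_mul_diagonal, ← Matrix.diagonal_one]
    exact congrArg Matrix.diagonal (_root_.funext fun i => mul_inv_cancel₀ (hU0 i))
  have hmid : Matrix.diagonal (fun i => ((Real.sqrt (Dv i) : ℝ) : ℂ)) * Matrix.diagonal cbar *
      Matrix.diagonal (fun i => (U i 0)⁻¹) = 1 := by
    rw [Matrix.diagonal_mul_diagonal, Matrix.diagonal_mul_diagonal, ← Matrix.diagonal_one]
    refine congrArg Matrix.diagonal (_root_.funext fun i => ?_)
    rw [show cbar i = U i 0 * ((Real.sqrt (Dv i) : ℝ) : ℂ)⁻¹ from rfl]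
    field_simp
    exact div_self (mul_ne_zero (hsq0 i) (hU0 i))
  have hAA : A * Matrix.diagonal cbar * A
      = Matrix.diagonal (fun i => (cbar i)⁻¹) := by
    rw [hA, hdinv]
    set D1 := Matrix.diagonal (fun i => (U i 0)⁻¹)
    set D2 := Matrix.diagonal (fun i : Fin (d+1) => ((Real.sqrt (Dv i) : ℝ) : ℂ))
    have step1 : D1 * U * D2 * Matrix.diagonal cbar * (D1 * U * D2)
        = D1 * (U * ((D2 * Matrix.diagonal cbar * D1) * (U * D2))) := by
      simp only [Matrix.mul_assoc]
    rw [step1, hmid, Matrix.one_mul,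
      show U * (U * D2) = (U * U) * D2 by simp only [Matrix.mul_assoc], hU2, Matrix.one_mul]
    rw [Matrix.diagonal_mul_diagonal]
    refine congrArg Matrix.diagonal (_root_.funext fun i => ?_)
    rw [show cbar i = U i 0 * ((Real.sqrt (Dv i) : ℝ) : ℂ)⁻¹ from rfl, mul_inv, inv_inv]
  -- symmetric power computations
  rw [hΦ, hCd, sq]
  set Y := symPow d N A with hYdef
  have hXc := SymPowAux.symPow_diagonal d N c
  have hXH : (symPow d N (Matrix.diagonal c))ᴴ = symPow d N (Matrix.diagonal cbar) := by
    rw [hXc, SymPowAux.symPow_diagonal, Matrix.diagonal_conjTranspose]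
    refine congrArg Matrix.diagonal (_root_.funext fun mm => ?_)
    show (starRingEnd ℂ) (∏ i, c i ^ mm.1 i) = _
    rw [_root_.map_prod]
    exact Finset.prod_congr rfl fun i _ => by
      rw [_root_.map_pow, show (starRingEnd ℂ) (c i) = cbar i from hstarc i]
  have h1 : Y * (symPow d N (Matrix.diagonal c))ᴴ * Y
      = Matrix.diagonal (fun mm : MIdx d N => ∏ i, ((cbar i)⁻¹) ^ mm.1 i) := by
    rw [hXH, hYdef, ← SymPowAux.symPow_mul, ← SymPowAux.symPow_mul, hAA,
      SymPowAux.symPow_diagonal]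
  have h2 : Yᴴ * (symPow d N (Matrix.diagonal c) * Yᴴ)
      = Matrix.diagonal (fun mm : MIdx d N => ∏ i, ((c i)⁻¹) ^ mm.1 i) := by
    have := congrArg Matrix.conjTranspose h1
    rw [Matrix.conjTranspose_mul, Matrix.conjTranspose_mul,
      Matrix.conjTranspose_conjTranspose, Matrix.diagonal_conjTranspose] at this
    rw [this]
    refine congrArg Matrix.diagonal (_root_.funext fun mm => ?_)
    show (starRingEnd ℂ) (∏ i, ((cbar i)⁻¹) ^ mm.1 i) = _
    rw [_root_.map_prod]
    exact Finset.prod_congr rfl fun i _ => by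
      rw [_root_.map_pow, map_inv₀,
        show (starRingEnd ℂ) (cbar i) = c i from hstarcbar i]
  rw [show symPow d N (Matrix.diagonal c) * Yᴴ * (symPow d N (Matrix.diagonal c) * Yᴴ)
      = symPow d N (Matrix.diagonal c) * (Yᴴ * (symPow d N (Matrix.diagonal c) * Yᴴ))
      by simp only [Matrix.mul_assoc]]
  rw [h2, hXc, Matrix.diagonal_mul_diagonal, ← Matrix.diagonal_one]
  refine congrArg Matrix.diagonal (_root_.funext fun mm => ?_)
  rw [← Finset.prod_mul_distrib]
  exact Finset.prod_eq_one fun i _ => by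
    rw [← mul_pow, mul_inv_cancel₀ (hc0 i), one_pow]
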